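/- The immaculate functions satisfy the right-Pieri rule: for any composition α and positive integer s, 𝔖_α · H_s = Σ_{α ⊂_s β} 𝔖_β in NSym, where the sum is over compositions β with |β| = |α| + s, α_j ≤ β_j for all j ≤ ℓ(α), and ℓ(β) ≤ ℓ(α) + 1. -/

import Mathlib

/-- `NSym`, the free associative `ℚ`-algebra on generators `H₁, H₂, …`,
modelled as the monoid algebra of the free monoid on positive integers. -/
abbrev NSym := MonoidAlgebra ℚ (FreeMonoid {i : ℕ // 0 < i})

/-- The generator `H_i` (with the convention `H_0 = 1`). -/
noncomputable def Hn : ℕ → NSym := fun i =>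
  if h : 0 < i then MonoidAlgebra.of ℚ (FreeMonoid {i : ℕ // 0 < i}) (FreeMonoid.of ⟨i, h⟩)
  else 1

/-- `H` indexed by an integer: `H_m = 0` for `m < 0`. -/
noncomputable def Hz : ℤ → NSym := fun m => if m < 0 then 0 else Hn m.toNat

/-- `H_α = H_{α₁} ⋯ H_{α_m}`. -/
noncomputable def Hprod (α : List ℕ) : NSym := (α.map Hn).prod

/-- The immaculate function of an integer tuple, via the noncommutative
Jacobi–Trudi formula `𝔖_α = Σ_σ sgn(σ) H_{α₁+σ(1)-1} ⋯ H_{α_m+σ(m)-m}`. -/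
noncomputable def imm (α : List ℤ) : NSym :=
  ∑ σ : Equiv.Perm (Fin α.length),
    (Equiv.Perm.sign σ : ℤ) •
      (List.ofFn (fun i => Hz (α.get i + ((σ i : ℕ) : ℤ) - ((i : ℕ) : ℤ)))).prod

/-- The immaculate function of a composition. -/
noncomputable def immN (α : List ℕ) : NSym := imm (α.map (fun a => (a : ℤ)))

noncomputable def immF {k : ℕ} (f : Fin k → ℤ) : NSym :=
  ∑ σ : Equiv.Perm (Fin k),
    (Equiv.Perm.sign σ : ℤ) •
      (List.ofFn (fun i => Hz (f i + ((σ i : ℕ) : ℤ) - ((i : ℕ) : ℤ)))).prod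

lemma Hz_neg {m : ℤ} (h : m < 0) : Hz m = 0 := if_pos h

lemma Hz_zero : Hz 0 = 1 := by simp [Hz, Hn]

lemma imm_eq_immF (l : List ℤ) : imm l = immF (l.get) := rfl

lemma immF_cast {k k' : ℕ} (h : k = k') (f : Fin k' → ℤ) :
    immF (fun i : Fin k => f (Fin.cast h i)) = immF f := by subst h; rfl

lemma imm_ofFn {k : ℕ} (f : Fin k → ℤ) : imm (List.ofFn f) = immF f := by
  rw [imm_eq_immF, ← immF_cast (List.length_ofFn (f := f)) f]
  congr 1
  funext i
  exact List.get_ofFn f i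
def eK (k : ℕ) : Fin k ≃ {i : Fin (k+1) // (i : ℕ) < k} where
  toFun i := ⟨i.castSucc, i.2⟩
  invFun j := ⟨j.1.1, j.2⟩
  left_inv i := rfl
  right_inv j := by ext; rfl

lemma hcs {k : ℕ} (i : Fin k) : ((i.castSucc : Fin (k+1)) : ℕ) < k := by simp

lemma extend_castSucc {k : ℕ} (σ : Equiv.Perm (Fin k)) (i : Fin k) :
    σ.extendDomain (eK k) i.castSucc = (σ i).castSucc := by
  rw [Equiv.Perm.extendDomain_apply_subtype _ (eK k) (hcs i)]
  have h1 : (eK k).symm ⟨i.castSucc, hcs i⟩ = i := by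
    apply Fin.ext
    rfl
  rw [h1]
  rfl

lemma extend_last {k : ℕ} (σ : Equiv.Perm (Fin k)) :
    σ.extendDomain (eK k) (Fin.last k) = Fin.last k :=
  Equiv.Perm.extendDomain_apply_not_subtype _ (eK k) (by simp)

lemma immF_pad {k : ℕ} (f : Fin (k+1) → ℤ) (hf : f (Fin.last k) = 0) :
    immF f = immF (fun i : Fin k => f i.castSucc) := by
  classical
  unfold immF
  rw [← Finset.sum_filter_of_ne (p := fun σ : Equiv.Perm (Fin (k+1)) => σ (Fin.last k) = Fin.last k)]
  · refine (Finset.sum_bij (fun (σ : Equiv.Perm (Fin k)) _ => σ.extendDomain (eK k)) ?_ ?_ ?_ ?_).symm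
    · intro σ _
      simp only [Finset.mem_filter, Finset.mem_univ, true_and]
      exact extend_last σ
    · intro σ1 _ σ2 _ h
      exact Equiv.Perm.extendDomainHom_injective (eK k) h
    · intro τ hτ
      simp only [Finset.mem_filter, Finset.mem_univ, true_and] at hτ
      have hlt : ∀ i : Fin k, ((τ i.castSucc : Fin (k+1)) : ℕ) < k := by
        intro i
        have hne : τ i.castSucc ≠ Fin.last k := by
          intro hcontra
          have h2 : i.castSucc = Fin.last k := τ.injective (hcontra.trans hτ.symm)
          have := congrArg Fin.val h2
          simp at this
          omega
        have h3 := (τ i.castSucc).isLt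
        have h4 : ((τ i.castSucc : Fin (k+1)) : ℕ) ≠ k := fun hh => hne (Fin.ext (by simpa using hh))
        omega
      set g : Fin k → Fin k := fun i => (⟨(τ i.castSucc : Fin (k+1)), hlt i⟩ : Fin k) with hg
      have hinj : Function.Injective g := by
        intro a b hab
        have h5 := congrArg Fin.val hab
        simp only [hg] at h5
        have h6 : (τ a.castSucc : Fin (k+1)) = τ b.castSucc := Fin.ext h5
        exact Fin.castSucc_injective k (τ.injective h6)
      refine ⟨Equiv.ofBijective _ (Finite.injective_iff_bijective.mp hinj), Finset.mem_univ _, ?_⟩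
      ext j
      refine Fin.lastCases ?_ ?_ j
      · rw [extend_last, hτ]
      · intro i
        rw [extend_castSucc]
        have h7 : (Equiv.ofBijective g (Finite.injective_iff_bijective.mp hinj)) i = g i := rfl
        rw [h7]
        simp [hg, Fin.ext_iff]
    · intro σ _
      rw [Equiv.Perm.sign_extendDomain]
      congr 1
      rw [List.ofFn_succ', List.concat_eq_append, List.prod_append]
      have hlast : Hz (f (Fin.last k) + ((σ.extendDomain (eK k) (Fin.last k) : Fin (k+1)) : ℕ) - ((Fin.last k : Fin (k+1)) : ℕ)) = 1 := by
        rw [extend_last, hf]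
        simp [Hz_zero]
      rw [List.prod_singleton, hlast, mul_one]
      refine congrArg List.prod (congrArg List.ofFn (funext fun i => ?_))
      rw [extend_castSucc]
      congr 2
  · intro σ _ hne
    by_contra hfix
    apply hne
    have h3 := (σ (Fin.last k)).isLt
    have h4 : ((σ (Fin.last k) : Fin (k+1)) : ℕ) ≠ k := fun hh => hfix (Fin.ext (by simpa using hh))
    have hzero : Hz (f (Fin.last k) + ((σ (Fin.last k) : Fin (k+1)) : ℕ) - ((Fin.last k : Fin (k+1)) : ℕ)) = 0 := by
      apply Hz_neg
      rw [hf]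
      simp only [Fin.val_last]
      omega
    rw [List.prod_eq_zero, smul_zero]
    rw [List.mem_ofFn]
    exact ⟨Fin.last k, hzero⟩




def Ndet (k : ℕ) (c : Fin k → ℕ) : ℤ :=
  ∑ τ : Equiv.Perm (Fin k), if (∀ i, ((τ i : ℕ) ≤ c i)) then (Equiv.Perm.sign τ : ℤ) else 0

def Mdet (k : ℕ) (c : Fin k → ℕ) : Matrix (Fin k) (Fin k) ℤ :=
  fun r j => if (r : ℕ) ≤ c j then 1 else 0

lemma Ndet_eq_det {k : ℕ} (c : Fin k → ℕ) : Ndet k c = (Mdet k c).det := by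
  rw [Matrix.det_apply]
  refine Finset.sum_congr rfl fun τ _ => ?_
  have : ∏ i, Mdet k c (τ i) i = if (∀ i, ((τ i : ℕ) ≤ c i)) then 1 else 0 := by
    simp [Mdet, Finset.prod_boole]
  rw [this]
  rcases Classical.em (∀ i, ((τ i : ℕ) ≤ c i)) with h | h <;>
    simp [h, Units.smul_def]

lemma Ndet_eq_zero {k : ℕ} (c : Fin k → ℕ) {i j : Fin k} (hne : i ≠ j)
    (h : ∀ r : Fin k, ((r : ℕ) ≤ c i ↔ (r : ℕ) ≤ c j)) : Ndet k c = 0 := by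
  rw [Ndet_eq_det]
  exact Matrix.det_zero_of_column_eq hne (fun r => by simp [Mdet, h r])

lemma Ndet_eq_sign {k : ℕ} (c : Fin k → ℕ) (π : Equiv.Perm (Fin k))
    (h : ∀ j, ∀ r : Fin k, ((r : ℕ) ≤ c j ↔ (r : ℕ) ≤ (π j : ℕ))) :
    Ndet k c = (Equiv.Perm.sign π : ℤ) := by
  rw [Ndet_eq_det]
  have hM : Mdet k c = (Mdet k (fun j : Fin k => (j : ℕ))).submatrix id π := by
    ext r j
    simp only [Mdet, Matrix.submatrix_apply, id]
    by_cases hc : (r : ℕ) ≤ c j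
    · rw [if_pos hc, if_pos ((h j r).mp hc)]
    · rw [if_neg hc, if_neg (fun hh => hc ((h j r).mpr hh))]
  rw [hM, Matrix.det_permute']
  have h1 : (Mdet k (fun j : Fin k => (j : ℕ))).det = 1 := by
    rw [Matrix.det_of_upperTriangular]
    · simp [Mdet]
    · intro i j hij
      simp only [Mdet, id] at hij ⊢
      rw [if_neg]
      rw [Fin.lt_def] at hij
      omega
  rw [h1, mul_one]
  simp [Units.smul_def]
noncomputable def Wrd {k : ℕ} (a : Fin k → ℕ) (c : Fin k → ℕ) : NSym :=
  (List.ofFn (fun i : Fin k => Hz ((a i : ℤ) + (c i : ℤ) - ((i : ℕ) : ℤ)))).prod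

lemma Hz_natCast (s : ℕ) : Hz (s : ℤ) = Hn s := by
  simp [Hz]

/-- the index map from permutations to bound vectors -/
def iota (k s : ℕ) (σ : Equiv.Perm (Fin k)) : Fin (k+1) → ℕ :=
  fun i => if h : (i : ℕ) < k then (σ ⟨(i : ℕ), h⟩ : ℕ) else k + s

lemma iota_castSucc {k s : ℕ} (σ : Equiv.Perm (Fin k)) (i : Fin k) :
    iota k s σ i.castSucc = (σ i : ℕ) := by
  simp only [iota]
  rw [dif_pos (hcs i)]
  congr 1

lemma iota_last {k s : ℕ} (σ : Equiv.Perm (Fin k)) :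
    iota k s σ (Fin.last k) = k + s := by
  simp [iota]

lemma sum_val_perm {k : ℕ} (σ : Equiv.Perm (Fin k)) :
    ∑ i, ((σ i : Fin k) : ℕ) = ∑ i : Fin k, (i : ℕ) :=
  Equiv.sum_comp σ (fun i => (i : ℕ))

lemma core_identity (k s : ℕ) (a : Fin (k+1) → ℕ) (ha : a (Fin.last k) = 0) :
    ∑ ε ∈ Finset.Nat.antidiagonalTuple (k+1) s,
      immF (fun i : Fin (k+1) => (a i : ℤ) + (ε i : ℤ)) =
    ∑ σ : Equiv.Perm (Fin k),
      (Equiv.Perm.sign σ : ℤ) •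
        ((List.ofFn (fun i : Fin k =>
          Hz ((a i.castSucc : ℤ) + ((σ i : ℕ) : ℤ) - ((i : ℕ) : ℤ)))).prod * Hn s) := by
  classical
  set T : ℕ := ∑ i : Fin (k+1), (i : ℕ) with hT
  -- Step 1: unfold immF and reindex the inner data
  have step1 : ∀ ε ∈ Finset.Nat.antidiagonalTuple (k+1) s,
      immF (fun i : Fin (k+1) => (a i : ℤ) + (ε i : ℤ)) =
      ∑ σ : Equiv.Perm (Fin (k+1)), (Equiv.Perm.sign σ : ℤ) •
        Wrd a (fun i => ε i + ((σ i : ℕ))) := by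
    intro ε _
    unfold immF Wrd
    refine Finset.sum_congr rfl fun σ _ => ?_
    congr 1
    refine congrArg List.prod (congrArg List.ofFn (funext fun i => ?_))
    congr 1
    push_cast
    ring
  rw [Finset.sum_congr rfl step1]
  -- Step 2/3: regroup by c = ε + σ-values
  have step3 : ∑ ε ∈ Finset.Nat.antidiagonalTuple (k+1) s,
      ∑ σ : Equiv.Perm (Fin (k+1)), (Equiv.Perm.sign σ : ℤ) •
        Wrd a (fun i => ε i + ((σ i : ℕ))) =
      ∑ c ∈ Finset.Nat.antidiagonalTuple (k+1) (s + T), (Ndet (k+1) c) • Wrd a c := by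
    rw [Finset.sum_comm]
    have inner : ∀ σ : Equiv.Perm (Fin (k+1)),
        ∑ ε ∈ Finset.Nat.antidiagonalTuple (k+1) s,
          (Equiv.Perm.sign σ : ℤ) • Wrd a (fun i => ε i + ((σ i : ℕ))) =
        ∑ c ∈ Finset.Nat.antidiagonalTuple (k+1) (s + T),
          (if (∀ i, ((σ i : ℕ) ≤ c i)) then (Equiv.Perm.sign σ : ℤ) else 0) • Wrd a c := by
      intro σ
      have hite : ∀ c : Fin (k+1) → ℕ,
          (if (∀ i, ((σ i : ℕ) ≤ c i)) then (Equiv.Perm.sign σ : ℤ) else 0) • Wrd a c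
          = if (∀ i, ((σ i : ℕ) ≤ c i)) then (Equiv.Perm.sign σ : ℤ) • Wrd a c else 0 := by
        intro c
        split <;> simp
      rw [Finset.sum_congr rfl (fun c _ => hite c), ← Finset.sum_filter]
      refine Finset.sum_nbij' (i := fun ε => fun i => ε i + ((σ i : ℕ)))
        (j := fun c => fun i => c i - ((σ i : ℕ))) ?_ ?_ ?_ ?_ ?_
      · intro ε hε
        rw [Finset.Nat.mem_antidiagonalTuple] at hε
        simp only [Finset.mem_filter, Finset.Nat.mem_antidiagonalTuple]
        constructor
        · rw [Finset.sum_add_distrib, hε, sum_val_perm σ, hT]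
        · intro i; omega
      · intro c hc
        simp only [Finset.mem_filter, Finset.Nat.mem_antidiagonalTuple] at hc
        rw [Finset.Nat.mem_antidiagonalTuple]
        obtain ⟨hsum, hle⟩ := hc
        have : ∑ i, (c i - ((σ i : ℕ))) = (∑ i, c i) - ∑ i, ((σ i : ℕ)) := by
          rw [eq_tsub_iff_add_eq_of_le, ← Finset.sum_add_distrib]
          · exact Finset.sum_congr rfl fun i _ => by have := hle i; omega
          · exact Finset.sum_le_sum fun i _ => hle i
        rw [this, hsum, sum_val_perm σ, ← hT]
        omega
      · intro ε _
        funext i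
        show ε i + ((σ i : ℕ)) - ((σ i : ℕ)) = ε i
        omega
      · intro c hc
        simp only [Finset.mem_filter] at hc
        funext i
        have := hc.2 i
        show c i - ((σ i : ℕ)) + ((σ i : ℕ)) = c i
        omega
      · intro ε _
        rfl
    rw [Finset.sum_congr rfl (fun σ _ => inner σ), Finset.sum_comm]
    refine Finset.sum_congr rfl fun c _ => ?_
    rw [← Finset.sum_smul]
    rfl
  rw [step3]
  -- Step 5: only the iota image survives
  have himage : ∀ σ : Equiv.Perm (Fin k), iota k s σ ∈ Finset.Nat.antidiagonalTuple (k+1) (s + T) := by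
    intro σ
    rw [Finset.Nat.mem_antidiagonalTuple, Fin.sum_univ_castSucc]
    simp only [iota_last]
    rw [Finset.sum_congr rfl (fun i _ => iota_castSucc σ i), sum_val_perm σ, hT,
      Fin.sum_univ_castSucc]
    simp only [Fin.val_last, Fin.coe_castSucc]
    omega
  have hinj : Function.Injective (iota k s) := by
    intro σ1 σ2 h
    ext i
    have := congrFun h i.castSucc
    rw [iota_castSucc, iota_castSucc] at this
    exact this
  have hsub : Finset.univ.image (iota k s) ⊆ Finset.Nat.antidiagonalTuple (k+1) (s + T) :=
    Finset.image_subset_iff.mpr fun σ _ => himage σ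
  have hvan : ∀ c ∈ Finset.Nat.antidiagonalTuple (k+1) (s + T),
      c ∉ Finset.univ.image (iota k s) → (Ndet (k+1) c) • Wrd a c = 0 := by
    intro c hc hnotin
    by_contra hne
    apply hnotin
    rw [Finset.Nat.mem_antidiagonalTuple] at hc
    have hW : Wrd a c ≠ 0 := fun h => hne (by rw [h, smul_zero])
    have hNd : Ndet (k+1) c ≠ 0 := fun h => hne (by rw [h, zero_smul])
    have hclast : k ≤ c (Fin.last k) := by
      by_contra hlt
      apply hW
      unfold Wrd
      rw [List.prod_eq_zero]
      rw [List.mem_ofFn]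
      refine ⟨Fin.last k, ?_⟩
      apply Hz_neg
      rw [ha]
      simp only [Fin.val_last]
      push_cast
      omega
    have hsmall : ∀ i : Fin k, c i.castSucc < k := by
      intro i
      by_contra hge
      apply hNd
      refine Ndet_eq_zero c (i := i.castSucc) (j := Fin.last k) ?_ ?_
      · intro h
        have := congrArg Fin.val h
        simp at this
        omega
      · intro r
        have := r.isLt
        constructor <;> intro <;> omega
    have hdist : ∀ i j : Fin k, i ≠ j → c i.castSucc ≠ c j.castSucc := by
      intro i j hij heq
      apply hNd
      refine Ndet_eq_zero c (i := i.castSucc) (j := j.castSucc)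
        (fun h => hij (Fin.castSucc_injective k h)) ?_
      intro r
      rw [heq]
    set g : Fin k → Fin k := fun i => (⟨c i.castSucc, hsmall i⟩ : Fin k) with hg
    have hginj : Function.Injective g := by
      intro i j hij
      by_contra hne2
      exact hdist i j hne2 (congrArg Fin.val hij)
    set σ : Equiv.Perm (Fin k) := Equiv.ofBijective g (Finite.injective_iff_bijective.mp hginj) with hσ
    have hsumc : ∑ i : Fin k, c i.castSucc = T - k := by
      have h1 : ∑ i : Fin k, c i.castSucc = ∑ i, ((σ i : Fin k) : ℕ) := by
        refine Finset.sum_congr rfl fun i _ => ?_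
        rw [hσ]
        rfl
      rw [h1, sum_val_perm σ, hT, Fin.sum_univ_castSucc]
      simp only [Fin.val_last, Fin.coe_castSucc]
      omega
    have hclast2 : c (Fin.last k) = k + s := by
      have h2 : ∑ i : Fin (k+1), c i = s + T := hc
      rw [Fin.sum_univ_castSucc, hsumc] at h2
      have hTk : k ≤ T := by
        rw [hT, Fin.sum_univ_castSucc]
        simp
      omega
    rw [Finset.mem_image]
    refine ⟨σ, Finset.mem_univ σ, ?_⟩
    funext i
    refine Fin.lastCases ?_ ?_ i
    · rw [iota_last, hclast2]
    · intro i
      rw [iota_castSucc]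
      rw [hσ]
      rfl
  have hval : ∀ σ : Equiv.Perm (Fin k),
      (Ndet (k+1) (iota k s σ)) • Wrd a (iota k s σ) =
      (Equiv.Perm.sign σ : ℤ) •
        ((List.ofFn (fun i : Fin k =>
          Hz ((a i.castSucc : ℤ) + ((σ i : ℕ) : ℤ) - ((i : ℕ) : ℤ)))).prod * Hn s) := by
    intro σ
    have hN : Ndet (k+1) (iota k s σ) = (Equiv.Perm.sign (σ.extendDomain (eK k)) : ℤ) := by
      apply Ndet_eq_sign
      intro j r
      refine Fin.lastCases ?_ ?_ j
      · rw [iota_last, extend_last]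
        have := r.isLt
        simp only [Fin.val_last]
        constructor <;> intro <;> omega
      · intro i
        rw [iota_castSucc, extend_castSucc]
        simp
    rw [hN, Equiv.Perm.sign_extendDomain]
    congr 1
    unfold Wrd
    rw [List.ofFn_succ', List.concat_eq_append, List.prod_append, List.prod_singleton]
    congr 1
    · refine congrArg List.prod (congrArg List.ofFn (funext fun i => ?_))
      rw [iota_castSucc]
      congr 2
    · rw [iota_last, ha]
      have : ((0 : ℕ) : ℤ) + ((k + s : ℕ) : ℤ) - ((Fin.last k : Fin (k+1)) : ℕ) = (s : ℤ) := by
        simp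
      rw [this, Hz_natCast]
  calc ∑ c ∈ Finset.Nat.antidiagonalTuple (k+1) (s + T), (Ndet (k+1) c) • Wrd a c
      = ∑ c ∈ Finset.univ.image (iota k s), (Ndet (k+1) c) • Wrd a c :=
        (Finset.sum_subset hsub hvan).symm
    _ = ∑ σ : Equiv.Perm (Fin k), (Ndet (k+1) (iota k s σ)) • Wrd a (iota k s σ) :=
        Finset.sum_image (fun σ _ τ _ h => hinj h)
    _ = _ := Finset.sum_congr rfl fun σ _ => hval σ


lemma immN_eq_map (l : List ℕ) : immN l = imm (List.map (fun a : ℕ => (a : ℤ)) l) := by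
  unfold immN
  congr 1
  induction l with
  | nil => rfl
  | cons x xs ih => simp_all

lemma sum_getD (l : List ℕ) (k : ℕ) (h : l.length ≤ k) :
    ∑ i ∈ Finset.range k, l.getD i 0 = l.sum := by
  induction l generalizing k with
  | nil => simp
  | cons x xs ih =>
    cases k with
    | zero => simp at h
    | succ k' =>
      rw [Finset.sum_range_succ']
      simp only [List.getD_cons_succ, List.getD_cons_zero, List.sum_cons]
      rw [ih k' (by simpa using h)]
      ring

lemma sum_getD_fin (l : List ℕ) (k : ℕ) (h : l.length ≤ k) :
    ∑ i : Fin k, l.getD (i : ℕ) 0 = l.sum := by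
  exact (Fin.sum_univ_eq_sum_range (fun j => l.getD j 0) k).trans (sum_getD l k h)


/-- The right-Pieri rule: `𝔖_α · H_s = Σ_{α ⊂_s β} 𝔖_β`, the sum over all
compositions `β` of `|α| + s` with `α_j ≤ β_j` for `j ≤ ℓ(α)` and
`ℓ(β) ≤ ℓ(α) + 1`. -/
theorem stmt_12 (n : ℕ) (α : Composition n) (s : ℕ) (hs : 0 < s) :
    immN α.blocks * Hn s =
      ∑ β ∈ Finset.univ.filter (fun β : Composition (n + s) =>
          (∀ j < α.length, α.blocks.getD j 0 ≤ β.blocks.getD j 0) ∧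
          β.length ≤ α.length + 1),
        immN β.blocks := by
  classical
  set m := α.length with hm
  set a : Fin (m+1) → ℕ := fun i => α.blocks.getD (i : ℕ) 0 with haa
  have hblen : α.blocks.length = m := rfl
  have ha : a (Fin.last m) = 0 := by
    simp only [haa, Fin.val_last]
    exact List.getD_eq_default _ _ (le_of_eq hblen)
  have hapos : ∀ i : Fin m, 0 < a i.castSucc := by
    intro i
    simp only [haa, Fin.coe_castSucc]
    rw [List.getD_eq_getElem _ _ (by rw [hblen]; exact i.2)]
    exact α.blocks_pos (List.getElem_mem _)
  -- LHS computation
  have h1 : immN α.blocks = immF (fun i : Fin m => ((a i.castSucc : ℕ) : ℤ)) := by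
    rw [immN_eq_map]
    have hlen : (α.blocks.map (fun x : ℕ => (x : ℤ))).length = m := by
      simp only [List.length_map, hblen]
    have hfun : (α.blocks.map (fun x : ℕ => (x : ℤ))).get
        = fun i => (fun j : Fin m => ((a j.castSucc : ℕ) : ℤ)) (Fin.cast hlen i) := by
      funext i
      have hib : (i : ℕ) < α.blocks.length := by
        rw [hblen, ← hlen]
        exact i.2
      simp only [List.get_eq_getElem, List.getElem_map, haa, Fin.coe_castSucc, Fin.coe_cast,
        List.getD_eq_getElem _ _ hib]
    rw [imm_eq_immF, hfun]
    exact immF_cast hlen (fun j : Fin m => ((a j.castSucc : ℕ) : ℤ))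
  have hL : immF (fun i : Fin m => ((a i.castSucc : ℕ) : ℤ)) * Hn s =
      ∑ σ : Equiv.Perm (Fin m), (Equiv.Perm.sign σ : ℤ) •
        ((List.ofFn (fun i : Fin m =>
          Hz ((a i.castSucc : ℤ) + ((σ i : ℕ) : ℤ) - ((i : ℕ) : ℤ)))).prod * Hn s) := by
    unfold immF
    rw [Finset.sum_mul]
    exact Finset.sum_congr rfl fun σ _ => smul_mul_assoc _ _ _
  rw [h1, hL, ← core_identity m s a ha]
  -- now the bijection between epsilon vectors and compositions
  set bl : (Fin (m+1) → ℕ) → List ℕ := fun ε =>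
    if ε (Fin.last m) = 0 then List.ofFn (fun i : Fin m => a i.castSucc + ε i.castSucc)
    else List.ofFn (fun i : Fin (m+1) => a i + ε i) with hbl
  have hsum_a_m : ∑ i : Fin m, a i.castSucc = n := by
    have : ∀ i : Fin m, a i.castSucc = α.blocks.getD (i : ℕ) 0 := fun i => rfl
    rw [Finset.sum_congr rfl fun i _ => this i]
    exact (sum_getD_fin α.blocks m (le_of_eq hblen)).trans α.blocks_sum
  have hsum_a : ∑ i : Fin (m+1), a i = n := by
    rw [haa]
    exact (sum_getD_fin α.blocks (m+1) (by omega)).trans α.blocks_sum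
  have hpos : ∀ ε : Fin (m+1) → ℕ, ∀ x ∈ bl ε, 0 < x := by
    intro ε x hx
    rw [hbl] at hx
    simp only at hx
    split_ifs at hx with h0
    · rw [List.mem_ofFn] at hx
      obtain ⟨i, rfl⟩ := hx
      have := hapos i
      show 0 < a i.castSucc + ε i.castSucc
      omega
    · rw [List.mem_ofFn] at hx
      obtain ⟨i, rfl⟩ := hx
      refine Fin.lastCases ?_ ?_ i
      · show 0 < a (Fin.last m) + ε (Fin.last m)
        rw [ha]
        omega
      · intro j
        have := hapos j
        show 0 < a j.castSucc + ε j.castSucc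
        omega
  have hsum : ∀ ε ∈ Finset.Nat.antidiagonalTuple (m+1) s, (bl ε).sum = n + s := by
    intro ε hε
    rw [Finset.Nat.mem_antidiagonalTuple] at hε
    rw [hbl]
    simp only
    have hεsplit : ∑ i : Fin m, ε i.castSucc + ε (Fin.last m) = s := by
      rw [← Fin.sum_univ_castSucc]
      exact hε
    split_ifs with h0
    · rw [List.sum_ofFn, Finset.sum_add_distrib, hsum_a_m]
      omega
    · rw [List.sum_ofFn, Finset.sum_add_distrib, hsum_a, hε]
  refine Finset.sum_bij
    (fun ε hε => (⟨bl ε, fun hx => hpos ε _ hx, hsum ε hε⟩ : Composition (n+s)))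
    ?_ ?_ ?_ ?_
  · -- membership in the filter
    intro ε hε
    rw [Finset.mem_filter]
    refine ⟨Finset.mem_univ _, ?_, ?_⟩
    · intro j hj
      show α.blocks.getD j 0 ≤ (bl ε).getD j 0
      rw [hbl]
      simp only
      split_ifs with h0
      · have hrhs : (List.ofFn (fun i : Fin m => a i.castSucc + ε i.castSucc)).getD j 0
            = a ((⟨j, hj⟩ : Fin m)).castSucc + ε ((⟨j, hj⟩ : Fin m)).castSucc := by
          rw [List.getD_eq_getElem _ _ (by rw [List.length_ofFn]; exact hj)]
          rw [List.getElem_ofFn]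
        rw [hrhs]
        have : α.blocks.getD j 0 = a ((⟨j, hj⟩ : Fin m)).castSucc := rfl
        rw [this]
        omega
      · have hj1 : j < m + 1 := by omega
        have hrhs : (List.ofFn (fun i : Fin (m+1) => a i + ε i)).getD j 0
            = a (⟨j, hj1⟩ : Fin (m+1)) + ε (⟨j, hj1⟩ : Fin (m+1)) := by
          rw [List.getD_eq_getElem _ _ (by rw [List.length_ofFn]; exact hj1)]
          rw [List.getElem_ofFn]
        rw [hrhs]
        have : α.blocks.getD j 0 = a (⟨j, hj1⟩ : Fin (m+1)) := rfl
        rw [this]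
        omega
    · show (bl ε).length ≤ m + 1
      rw [hbl]
      simp only
      split_ifs <;> rw [List.length_ofFn] <;> omega
  · -- injectivity
    intro ε1 hε1 ε2 hε2 heq
    have hbleq : bl ε1 = bl ε2 := congrArg Composition.blocks heq
    rw [hbl] at hbleq
    simp only at hbleq
    split_ifs at hbleq with h01 h02 h02
    · have := List.ofFn_injective hbleq
      funext i
      refine Fin.lastCases ?_ ?_ i
      · rw [h01, h02]
      · intro j
        have h3 := congrFun this j
        omega
    · exact absurd (congrArg List.length hbleq) (by simp)
    · exact absurd (congrArg List.length hbleq) (by simp)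
    · have := List.ofFn_injective hbleq
      funext i
      have h3 := congrFun this i
      omega
  · -- surjectivity
    intro β hβ
    rw [Finset.mem_filter] at hβ
    obtain ⟨-, hc1, hc2⟩ := hβ
    have hβlen : β.blocks.length = β.length := rfl
    have hlen_ge : m ≤ β.blocks.length := by
      by_contra hlt
      push_neg at hlt
      have h4 := hc1 β.blocks.length (by omega)
      rw [List.getD_eq_default _ _ (le_refl _)] at h4
      have h5 : 0 < α.blocks.getD β.blocks.length 0 := by
        rw [List.getD_eq_getElem _ _ (by omega)]
        exact α.blocks_pos (List.getElem_mem _)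
      omega
    have hble : ∀ i : Fin (m+1), a i ≤ β.blocks.getD (i : ℕ) 0 := by
      intro i
      refine Fin.lastCases ?_ ?_ i
      · rw [ha]
        omega
      · intro j
        exact hc1 j j.2
    set ε : Fin (m+1) → ℕ := fun i => β.blocks.getD (i : ℕ) 0 - a i with hεdef
    have hsumβ : ∑ i : Fin (m+1), β.blocks.getD (i : ℕ) 0 = n + s :=
      (sum_getD_fin β.blocks (m+1) (by omega)).trans β.blocks_sum
    have hεmem : ε ∈ Finset.Nat.antidiagonalTuple (m+1) s := by
      rw [Finset.Nat.mem_antidiagonalTuple]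
      have h6 : ∑ i : Fin (m+1), ε i + ∑ i : Fin (m+1), a i
          = ∑ i : Fin (m+1), β.blocks.getD (i : ℕ) 0 := by
        rw [← Finset.sum_add_distrib]
        refine Finset.sum_congr rfl fun i _ => ?_
        have := hble i
        rw [hεdef]
        simp only
        omega
      rw [hsum_a, hsumβ] at h6
      omega
    refine ⟨ε, hεmem, ?_⟩
    have hblε : bl ε = β.blocks := by
      rw [hbl]
      simp only
      rcases Nat.lt_or_ge β.blocks.length (m+1) with hsml | hbig
      · have hβm : β.blocks.length = m := by omega
        have hε0 : ε (Fin.last m) = 0 := by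
          rw [hεdef]
          simp only [Fin.val_last]
          rw [List.getD_eq_default _ _ (by omega), ha]
        rw [if_pos hε0]
        refine List.ext_getElem (by rw [List.length_ofFn]; omega) ?_
        intro i h1 h2
        rw [List.getElem_ofFn]
        have h7 : a (⟨i, by simp at h1; omega⟩ : Fin m).castSucc ≤ β.blocks.getD i 0 :=
          hble _
        have h8 : β.blocks.getD i 0 = β.blocks[i] := List.getD_eq_getElem _ _ h2
        simp only [hεdef, Fin.coe_castSucc]
        omega
      · have hβm : β.blocks.length = m + 1 := by omega
        have hε0 : ε (Fin.last m) ≠ 0 := by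
          rw [hεdef]
          simp only [Fin.val_last]
          rw [List.getD_eq_getElem _ _ (by omega), ha]
          have := β.blocks_pos (i := β.blocks[m]) (List.getElem_mem _)
          omega
        rw [if_neg hε0]
        refine List.ext_getElem (by rw [List.length_ofFn]; omega) ?_
        intro i h1 h2
        rw [List.getElem_ofFn]
        have h7 : a (⟨i, by simp at h1; omega⟩ : Fin (m+1)) ≤ β.blocks.getD i 0 := hble _
        have h8 : β.blocks.getD i 0 = β.blocks[i] := List.getD_eq_getElem _ _ h2
        simp only [hεdef]
        omega
    exact Composition.ext hblε
  · -- term equality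
    intro ε hε
    show immF _ = immN (bl ε)
    rw [immN_eq_map, hbl]
    simp only
    split_ifs with h0
    · rw [List.map_ofFn, imm_ofFn]
      rw [immF_pad (fun i : Fin (m+1) => (a i : ℤ) + (ε i : ℤ))
        (by show (a (Fin.last m) : ℤ) + (ε (Fin.last m) : ℤ) = 0; rw [ha, h0]; simp)]
      refine congrArg immF (funext fun i => ?_)
      show (a i.castSucc : ℤ) + (ε i.castSucc : ℤ) = ((a i.castSucc + ε i.castSucc : ℕ) : ℤ)
      push_cast
      ring
    · rw [List.map_ofFn, imm_ofFn]
      refine congrArg immF (funext fun i => ?_)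
      show (a i : ℤ) + (ε i : ℤ) = ((a i + ε i : ℕ) : ℤ)
      push_cast
      ring
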